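/- Let λ_1,…,λ_d > 0 and let Λ_N = ∏_{k=1}^d [-N_k, N_k] ∩ Z^d. Define φ = Σ_{x∈Λ_N} ξ_{{x}} (the one-particle vector with all coefficients 1). Then ⟨φ, H_{Λ_N^{(1)}} φ⟩ / ‖φ‖² ≤ Σ_{k: λ_k≠1} (1-λ_k)²/(1+λ_k²) + Σ_{k=1}^d 1/(2N_k+1), where Λ_N^{(1)} is the enlargement of Λ_N by one lattice step and H is the one-species PVBS Hamiltonian. -/

import Mathlib

open scoped BigOperators

noncomputable section

abbrev Site (d : ℕ) := Fin d → ℤ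

def unitVec (d : ℕ) (k : Fin d) : Site d := fun j => if j = k then 1 else 0

abbrev Cfg {d : ℕ} (Λ : Finset (Site d)) := (↑Λ : Type) → Bool

abbrev HSp {d : ℕ} (Λ : Finset (Site d)) := EuclideanSpace ℂ (Cfg Λ)

/-- One-particle basis vector with the particle at site `x`. -/
def ksi {d : ℕ} {Λ : Finset (Site d)} (x : ↑Λ) : HSp Λ :=
  WithLp.toLp 2 (fun σ => if σ = (fun (y : ↑Λ) => decide ((y : Site d) = (x : Site d))) then 1 else 0)

/-- The all-zero (vacuum) product vector. -/
def vac {d : ℕ} (Λ : Finset (Site d)) : HSp Λ :=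
  WithLp.toLp 2 (fun σ => if σ = (fun _ => false) then 1 else 0)

/-- The PVBS nearest-neighbor interaction `|11><11| + |φ̂><φ̂|` acting on the bond `(x, y)`. -/
def hop {d : ℕ} {Λ : Finset (Site d)} (lam : ℝ) (x y : ↑Λ) (ψ : HSp Λ) : HSp Λ :=
  WithLp.toLp 2 fun σ =>
    (if σ x = true ∧ σ y = true then ψ σ else 0) +
    (if σ x = false ∧ σ y = true then
        (ψ (Function.update (Function.update σ x false) y true)
          - (lam : ℂ) * ψ (Function.update (Function.update σ x true) y false)) / (1 + (lam : ℂ)^2)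
     else if σ x = true ∧ σ y = false then
        -(lam : ℂ) * ((ψ (Function.update (Function.update σ x false) y true)
          - (lam : ℂ) * ψ (Function.update (Function.update σ x true) y false)) / (1 + (lam : ℂ)^2))
     else 0)

/-- The PVBS Hamiltonian on `Λ`: sum of the bond interactions over all nearest-neighbor
bonds `(x, x + e_k)` contained in `Λ`. -/
def Ham {d : ℕ} (Λ : Finset (Site d)) (lam : Fin d → ℝ) (ψ : HSp Λ) : HSp Λ :=
  WithLp.toLp 2 fun σ => ∑ k : Fin d, ∑ x : ↑Λ,
    (if h : ((x : Site d) + unitVec d k) ∈ Λ then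
        hop (lam k) x ⟨(x : Site d) + unitVec d k, h⟩ ψ σ else 0)

/-- `λ^x = ∏_k λ_k^{x_k}`. -/
def lamPow {d : ℕ} (lam : Fin d → ℝ) (x : Site d) : ℝ := ∏ k, (lam k) ^ (x k)

/-- `C(Λ) = ∑_{x∈Λ} λ^{2x}`. -/
def CC {d : ℕ} (lam : Fin d → ℝ) (Λ : Finset (Site d)) : ℝ := ∑ x ∈ Λ, (lamPow lam x)^2

/-- The normalized one-particle ground state vector. -/
def psi1 {d : ℕ} (Λ : Finset (Site d)) (lam : Fin d → ℝ) : HSp Λ :=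
  WithLp.toLp 2 fun σ => (Real.sqrt (CC lam Λ) : ℂ)⁻¹ * ∑ x : ↑Λ, ((lamPow lam x : ℝ) : ℂ) * ksi x σ

def Adj {d : ℕ} (x y : Site d) : Prop := ∃ k, y = x + unitVec d k ∨ x = y + unitVec d k

/-- `Λ` is connected in the nearest-neighbor graph of `ℤ^d`. -/
def ConnectedIn {d : ℕ} (Λ : Finset (Site d)) : Prop :=
  ∀ x ∈ Λ, ∀ y ∈ Λ, Relation.ReflTransGen (fun u v => v ∈ Λ ∧ Adj u v) x y

/-- The box `∏_k [−N_k, N_k] ∩ ℤ^d`. -/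
def box {d : ℕ} (N : Fin d → ℕ) : Finset (Site d) :=
  Fintype.piFinset (fun k => Finset.Icc (-(N k : ℤ)) (N k))

/-- The one-particle trial vector with all coefficients `1` on the box `Λ_N`, viewed inside
the enlarged box `Λ_N^{(1)}`. -/
def boxTrial {d : ℕ} (N : Fin d → ℕ) : HSp (box (fun k => N k + 1)) :=
  WithLp.toLp 2 fun σ => ∑ x : ↑(box (fun k => N k + 1)),
    (if (x : Site d) ∈ box N then (1 : ℂ) else 0) * ksi x σ

namespace PVBSaux

variable {d : ℕ} {Λ : Finset (Site d)}

def delta (x : ↑Λ) : Cfg Λ := fun y => decide ((y : Site d) = (x : Site d))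

lemma ksi_eq (x : ↑Λ) (σ : Cfg Λ) : ksi x σ = if σ = delta x then 1 else 0 := rfl

lemma delta_apply' (z x : ↑Λ) : delta z x = decide (x = z) := by
  simp only [delta]
  exact decide_eq_decide.mpr Subtype.coe_inj

lemma delta_eq_iff {x z : ↑Λ} : delta x = delta z ↔ x = z := by
  constructor
  · intro h
    have h2 := congrFun h x
    simp [delta_apply'] at h2
    exact h2
  · rintro rfl; rfl

lemma updA {x y : ↑Λ} (hxy : x ≠ y) :
    Function.update (Function.update (delta y) x false) y true = delta y := by
  funext w
  rcases eq_or_ne w y with rfl | hwy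
  · simp [Function.update_apply, delta_apply']
  · rcases eq_or_ne w x with rfl | hwx
    · simp [Function.update_apply, delta_apply', hwy, hxy]
    · simp [Function.update_apply, delta_apply', hwy, hwx]

lemma updB {x y : ↑Λ} (hxy : x ≠ y) :
    Function.update (Function.update (delta y) x true) y false = delta x := by
  funext w
  rcases eq_or_ne w y with rfl | hwy
  · simp [Function.update_apply, delta_apply', hxy.symm]
  · rcases eq_or_ne w x with rfl | hwx
    · simp [Function.update_apply, delta_apply', hwy]
    · simp [Function.update_apply, delta_apply', hwy, hwx]

lemma updC {x y : ↑Λ} (hxy : x ≠ y) :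
    Function.update (Function.update (delta x) x false) y true = delta y := by
  funext w
  rcases eq_or_ne w y with rfl | hwy
  · simp [Function.update_apply, delta_apply']
  · rcases eq_or_ne w x with rfl | hwx
    · simp [Function.update_apply, delta_apply', hwy]
    · simp [Function.update_apply, delta_apply', hwy, hwx]

lemma updD {x y : ↑Λ} (hxy : x ≠ y) :
    Function.update (Function.update (delta x) x true) y false = delta x := by
  funext w
  rcases eq_or_ne w y with rfl | hwy
  · simp [Function.update_apply, delta_apply', hxy.symm]
  · rcases eq_or_ne w x with rfl | hwx
    · simp [Function.update_apply, delta_apply', hwy]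
    · simp [Function.update_apply, delta_apply', hwy, hwx]

lemma hop_delta (lam : ℝ) (x y z : ↑Λ) (hxy : x ≠ y) (ψ : HSp Λ) :
    hop lam x y ψ (delta z) =
      if z = y then (ψ (delta y) - (lam:ℂ) * ψ (delta x)) / (1 + (lam:ℂ)^2)
      else if z = x then -(lam:ℂ) * ((ψ (delta y) - (lam:ℂ) * ψ (delta x)) / (1 + (lam:ℂ)^2))
      else 0 := by
  unfold hop
  simp only [WithLp.ofLp_toLp]
  rcases eq_or_ne z y with rfl | hzy
  · have h1 : delta z x = false := by simp [delta_apply', hxy]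
    have h2 : delta z z = true := by simp [delta_apply']
    rw [h1, h2, updA hxy, updB hxy]
    simp
  · rcases eq_or_ne z x with rfl | hzx
    · have h1 : delta z z = true := by simp [delta_apply']
      have h2 : delta z y = false := by simp [delta_apply', hxy.symm]
      rw [h1, h2, updC hxy, updD hxy]
      simp [hzy]
    · have h1 : delta z x = false := by simp [delta_apply', hzx.symm]
      have h2 : delta z y = false := by simp [delta_apply', hzy.symm]
      rw [h1, h2]
      simp [hzy, hzx]

lemma inner_trial (c : ↑Λ → ℂ) (φ v : HSp Λ)
    (hφ : ∀ σ, φ σ = ∑ x : ↑Λ, c x * ksi x σ) :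
    (inner ℂ φ v : ℂ) = ∑ z : ↑Λ, (starRingEnd ℂ) (c z) * v (delta z) := by
  simp only [PiLp.inner_apply, RCLike.inner_apply', hφ, map_sum, Finset.sum_mul]
  rw [Finset.sum_comm]
  refine Finset.sum_congr rfl fun x _ => ?_
  have key : ∀ σ : Cfg Λ, (starRingEnd ℂ) (c x * ksi x σ) * v σ
      = if σ = delta x then (starRingEnd ℂ) (c x) * v σ else 0 := by
    intro σ
    rw [ksi_eq]
    split_ifs with h <;> simp
  rw [Finset.sum_congr rfl fun σ _ => key σ,
    Finset.sum_ite_eq' Finset.univ (delta x) fun σ => (starRingEnd ℂ) (c x) * v σ]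
  simp


lemma trial_apply (c : ↑Λ → ℂ) (z : ↑Λ) : (∑ x : ↑Λ, c x * ksi x (delta z)) = c z := by
  have key : ∀ x : ↑Λ, c x * ksi x (delta z) = if x = z then c x else 0 := by
    intro x
    rw [ksi_eq]
    rcases eq_or_ne x z with rfl | h
    · simp
    · rw [if_neg (fun hh => h (delta_eq_iff.mp hh).symm), if_neg h]
      ring
  rw [Finset.sum_congr rfl fun x _ => key x, Finset.sum_ite_eq' Finset.univ z c]
  simp

lemma sum_conj_hop (lamk : ℝ) (c : ↑Λ → ℝ) (x y : ↑Λ) (hxy : x ≠ y)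
    (φ : HSp Λ) (hx : φ (delta x) = (c x : ℂ)) (hy : φ (delta y) = (c y : ℂ)) :
    ∑ z : ↑Λ, (starRingEnd ℂ) ((c z : ℝ) : ℂ) * hop lamk x y φ (delta z)
      = (((c y - lamk * c x)^2 / (1 + lamk^2) : ℝ) : ℂ) := by
  have key : ∀ z : ↑Λ, (starRingEnd ℂ) ((c z : ℝ) : ℂ) * hop lamk x y φ (delta z)
      = (if z = y then ((c y : ℝ) : ℂ) * ((φ (delta y) - (lamk:ℂ) * φ (delta x))/(1+(lamk:ℂ)^2)) else 0)
        + (if z = x then ((c x : ℝ) : ℂ) * (-(lamk:ℂ) * ((φ (delta y) - (lamk:ℂ) * φ (delta x))/(1+(lamk:ℂ)^2))) else 0) := by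
    intro z
    rw [hop_delta lamk x y z hxy, Complex.conj_ofReal]
    by_cases h1 : z = y
    · simp [h1, hxy.symm]
    · by_cases h2 : z = x
      · simp [h1, h2, hxy]
      · simp [h1, h2]
  rw [Finset.sum_congr rfl fun z _ => key z, Finset.sum_add_distrib,
    Finset.sum_ite_eq' Finset.univ y, Finset.sum_ite_eq' Finset.univ x]
  simp only [Finset.mem_univ, if_true, hx, hy]
  have hpos : (0:ℝ) < 1 + lamk^2 := by positivity
  have hne : (1 + (lamk:ℂ)^2) ≠ 0 := by
    intro h
    have : ((1 + lamk^2 : ℝ) : ℂ) = 0 := by push_cast; linear_combination h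
    exact hpos.ne' (by exact_mod_cast this)
  have hne' : (1 + lamk^2) ≠ 0 := hpos.ne'
  push_cast
  field_simp
  ring

end PVBSaux

section Energy

variable {d : ℕ} (N : Fin d → ℕ) (lam : Fin d → ℝ)

def rr (N : Fin d → ℕ) (w : Site d) : ℝ := if w ∈ box N then 1 else 0

set_option maxHeartbeats 2000000 in
lemma energy_eq :
    (inner ℂ (boxTrial N) (Ham (box fun k => N k + 1) lam (boxTrial N)) : ℂ)
      = ((∑ k : Fin d, ∑ x : ↑(box fun k => N k + 1),
          (if ((x : Site d) + unitVec d k) ∈ box (fun k => N k + 1) then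
            (rr N ((x : Site d) + unitVec d k) - lam k * rr N x)^2 / (1 + (lam k)^2) else 0) : ℝ) : ℂ) := by
  classical
  have hφ : ∀ σ, boxTrial N σ = ∑ x : ↑(box fun k => N k + 1), ((rr N x : ℝ) : ℂ) * ksi x σ := by
    intro σ
    refine Finset.sum_congr rfl fun x _ => ?_
    unfold rr
    split_ifs <;> simp
  have happ : ∀ z : ↑(box fun k => N k + 1), boxTrial N (PVBSaux.delta z) = ((rr N z : ℝ) : ℂ) := by
    intro z
    rw [hφ]
    exact PVBSaux.trial_apply _ z
  have h0 := PVBSaux.inner_trial (Λ := box fun k => N k+1) (fun z => ((rr N z : ℝ) : ℂ))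
    (boxTrial N) (Ham (box fun k => N k + 1) lam (boxTrial N)) hφ
  have hham : ∀ z : ↑(box fun k => N k + 1),
      Ham (box fun k => N k + 1) lam (boxTrial N) (PVBSaux.delta z)
      = ∑ k : Fin d, ∑ x : ↑(box fun k => N k + 1),
        (if h : ((x : Site d) + unitVec d k) ∈ (box fun k => N k + 1) then
          hop (lam k) x ⟨(x : Site d) + unitVec d k, h⟩ (boxTrial N) (PVBSaux.delta z) else 0) :=
    fun z => rfl
  rw [h0]
  simp only [hham, Finset.mul_sum]
  rw [Finset.sum_comm]
  rw [Complex.ofReal_sum]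
  refine Finset.sum_congr rfl fun k _ => ?_
  rw [Finset.sum_comm, Complex.ofReal_sum]
  refine Finset.sum_congr rfl fun x _ => ?_
  by_cases h : ((x : Site d) + unitVec d k) ∈ (box fun k => N k + 1)
  · rw [if_pos h]
    have hxy : x ≠ (⟨(x : Site d) + unitVec d k, h⟩ : ↑(box fun k => N k + 1)) := by
      intro he
      have h3 := congrArg (fun (w : ↑(box fun k => N k + 1)) => (w : Site d) k) he
      simp [unitVec] at h3
    have h2 := PVBSaux.sum_conj_hop (lam k) (fun z => rr N z) x
      (⟨(x : Site d) + unitVec d k, h⟩ : ↑(box fun k => N k + 1)) hxy (boxTrial N)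
      (happ x) (happ ⟨(x : Site d) + unitVec d k, h⟩)
    simp only [dif_pos h]
    rw [h2]
  · simp only [dif_neg h, if_neg h, mul_zero, Finset.sum_const_zero, Complex.ofReal_zero]


lemma mem_box_iff {d : ℕ} (M : Fin d → ℕ) (w : Site d) :
    w ∈ box M ↔ ∀ j, -(M j : ℤ) ≤ w j ∧ w j ≤ (M j : ℤ) := by
  simp [box, Fintype.mem_piFinset, Finset.mem_Icc]

lemma rr_zero {d : ℕ} {N : Fin d → ℕ} {w : Site d} {j0 : Fin d}
    (h : ¬(-(N j0 : ℤ) ≤ w j0 ∧ w j0 ≤ (N j0 : ℤ))) : rr N w = 0 := by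
  unfold rr
  rw [if_neg]
  rw [mem_box_iff]
  intro hm
  exact h (hm j0)

def gg {d : ℕ} (N : Fin d → ℕ) (lam : Fin d → ℝ) (k : Fin d) (j : Fin d) (t : ℤ) : ℝ :=
  if j = k then
    (if t + 1 ∈ Finset.Icc (-((N k : ℤ) + 1)) ((N k : ℤ) + 1) then
      ((if t + 1 ∈ Finset.Icc (-(N k : ℤ)) ((N k : ℤ)) then (1:ℝ) else 0)
        - lam k * (if t ∈ Finset.Icc (-(N k : ℤ)) ((N k : ℤ)) then (1:ℝ) else 0)) ^ 2
    else 0)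
  else (if t ∈ Finset.Icc (-(N j : ℤ)) ((N j : ℤ)) then (1:ℝ) else 0)

lemma point_eq {d : ℕ} (N : Fin d → ℕ) (lam : Fin d → ℝ) (k : Fin d) (x : Site d) :
    (if (x + unitVec d k) ∈ box (fun j => N j + 1) then
        (rr N (x + unitVec d k) - lam k * rr N x) ^ 2 else 0)
      = ∏ j, gg N lam k j (x j) := by
  classical
  have hadd : ∀ j, (x + unitVec d k) j = x j + (if j = k then 1 else 0) := fun j => rfl
  rw [← Finset.mul_prod_erase Finset.univ _ (Finset.mem_univ k)]
  by_cases hA : ∀ j, j ≠ k → (-(N j:ℤ) ≤ x j ∧ x j ≤ (N j:ℤ))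
  · have h1 : rr N x = (if x k ∈ Finset.Icc (-(N k:ℤ)) ((N k:ℤ)) then 1 else 0) := by
      unfold rr
      by_cases hk : x k ∈ Finset.Icc (-(N k:ℤ)) ((N k:ℤ))
      · rw [if_pos hk, if_pos]
        rw [mem_box_iff]
        intro j
        rcases eq_or_ne j k with rfl | hj
        · simpa [Finset.mem_Icc] using hk
        · exact hA j hj
      · rw [if_neg hk, if_neg]
        rw [mem_box_iff]
        intro hmem
        exact hk (by simpa [Finset.mem_Icc] using hmem k)
    have h2 : rr N (x + unitVec d k)
        = (if x k + 1 ∈ Finset.Icc (-(N k:ℤ)) ((N k:ℤ)) then 1 else 0) := by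
      unfold rr
      by_cases hk : x k + 1 ∈ Finset.Icc (-(N k:ℤ)) ((N k:ℤ))
      · rw [if_pos hk, if_pos]
        rw [mem_box_iff]
        intro j
        rcases eq_or_ne j k with rfl | hj
        · rw [hadd]
          simpa [Finset.mem_Icc] using hk
        · rw [hadd, if_neg hj, add_zero]
          exact hA j hj
      · rw [if_neg hk, if_neg]
        rw [mem_box_iff]
        intro hmem
        have := hmem k
        rw [hadd, if_pos rfl] at this
        exact hk (by simpa [Finset.mem_Icc] using this)
    have h3 : ((x + unitVec d k) ∈ box (fun j => N j + 1))
        ↔ (x k + 1 ∈ Finset.Icc (-((N k:ℤ)+1)) ((N k:ℤ)+1)) := by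
      rw [mem_box_iff]
      simp only [Finset.mem_Icc]
      constructor
      · intro h
        have := h k
        rw [hadd, if_pos rfl] at this
        push_cast at this
        omega
      · intro h j
        rw [hadd]
        rcases eq_or_ne j k with rfl | hj
        · rw [if_pos rfl]
          push_cast
          omega
        · rw [if_neg hj, add_zero]
          have := hA j hj
          push_cast
          omega
    have hrest : (∏ j ∈ Finset.univ.erase k, gg N lam k j (x j)) = 1 := by
      refine Finset.prod_eq_one fun j hj => ?_
      have hj' : j ≠ k := (Finset.mem_erase.mp hj).1
      rw [gg, if_neg hj', if_pos]
      simp only [Finset.mem_Icc]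
      exact (fun h => ⟨h.1, h.2⟩) (hA j hj')
    rw [hrest, mul_one, h1, h2, gg, if_pos rfl]
    by_cases hc : x k + 1 ∈ Finset.Icc (-((N k:ℤ)+1)) ((N k:ℤ)+1)
    · rw [if_pos (h3.mpr hc), if_pos hc]
    · rw [if_neg (fun hh => hc (h3.mp hh)), if_neg hc]
  · obtain ⟨j0, hj0⟩ := not_forall.mp hA
    rw [Classical.not_imp] at hj0
    obtain ⟨hj0ne, hx0⟩ := hj0
    have hz1 : rr N x = 0 := rr_zero hx0
    have hz2 : rr N (x + unitVec d k) = 0 := by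
      refine rr_zero (j0 := j0) ?_
      have hco : (x + unitVec d k) j0 = x j0 := by
        rw [hadd, if_neg hj0ne, add_zero]
      rw [hco]
      exact hx0
    have hz3 : (∏ j ∈ Finset.univ.erase k, gg N lam k j (x j)) = 0 := by
      refine Finset.prod_eq_zero (Finset.mem_erase.mpr ⟨hj0ne, Finset.mem_univ j0⟩) ?_
      rw [gg, if_neg hj0ne, if_neg]
      simp only [Finset.mem_Icc]
      exact hx0
    rw [hz1, hz2, hz3, mul_zero]
    split_ifs <;> ring

lemma gj_sum {d : ℕ} (N : Fin d → ℕ) (lam : Fin d → ℝ) (k j : Fin d) (hj : j ≠ k) :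
    ∑ t ∈ Finset.Icc (-((N j + 1 : ℕ) : ℤ)) ((N j + 1 : ℕ) : ℤ), gg N lam k j t
      = 2 * (N j : ℝ) + 1 := by
  have hfil : Finset.filter (fun t => t ∈ Finset.Icc (-(N j:ℤ)) ((N j:ℤ)))
      (Finset.Icc (-((N j + 1 : ℕ) : ℤ)) ((N j + 1 : ℕ) : ℤ)) = Finset.Icc (-(N j:ℤ)) ((N j:ℤ)) := by
    ext t
    simp only [Finset.mem_filter, Finset.mem_Icc]
    push_cast
    omega
  simp only [gg, if_neg hj]
  rw [← Finset.sum_filter, hfil, Finset.sum_const, Int.card_Icc]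
  have hcd : ((N j : ℤ) + 1 - (-(N j : ℤ))).toNat = 2 * N j + 1 := by omega
  rw [hcd]
  push_cast
  ring

lemma gk_sum {d : ℕ} (N : Fin d → ℕ) (lam : Fin d → ℝ) (k : Fin d) :
    ∑ t ∈ Finset.Icc (-((N k + 1 : ℕ) : ℤ)) ((N k + 1 : ℕ) : ℤ), gg N lam k k t
      = 1 + (lam k)^2 + 2 * (N k : ℝ) * (1 - lam k)^2 := by
  have hpt : ∀ t ∈ Finset.Icc (-((N k + 1 : ℕ) : ℤ)) ((N k + 1 : ℕ) : ℤ), gg N lam k k t =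
      (if t ∈ Finset.Icc (-(N k:ℤ)) ((N k:ℤ)-1) then (1 - lam k)^2 else 0)
      + ((if t = -((N k:ℤ)+1) then (1:ℝ) else 0) + (if t = (N k:ℤ) then (lam k)^2 else 0)) := by
    intro t ht
    simp only [Finset.mem_Icc] at ht
    push_cast at ht
    simp only [gg]
    rw [if_pos trivial]
    simp only [Finset.mem_Icc]
    split_ifs <;> first | ring1 | (exfalso; omega)
  rw [Finset.sum_congr rfl hpt, Finset.sum_add_distrib, Finset.sum_add_distrib]
  have hs1 : ∑ t ∈ Finset.Icc (-((N k + 1 : ℕ) : ℤ)) ((N k + 1 : ℕ) : ℤ),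
      (if t ∈ Finset.Icc (-(N k:ℤ)) ((N k:ℤ)-1) then (1 - lam k)^2 else 0)
      = 2 * (N k : ℝ) * (1 - lam k)^2 := by
    have hfil : Finset.filter (fun t => t ∈ Finset.Icc (-(N k:ℤ)) ((N k:ℤ)-1))
        (Finset.Icc (-((N k + 1 : ℕ) : ℤ)) ((N k + 1 : ℕ) : ℤ))
        = Finset.Icc (-(N k:ℤ)) ((N k:ℤ)-1) := by
      ext t
      simp only [Finset.mem_filter, Finset.mem_Icc]
      push_cast
      omega
    rw [← Finset.sum_filter, hfil, Finset.sum_const, Int.card_Icc]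
    have hcd : ((N k : ℤ) - 1 + 1 - (-(N k : ℤ))).toNat = 2 * N k := by omega
    rw [hcd]
    push_cast
    ring
  have hm1 : (-((N k:ℤ)+1)) ∈ Finset.Icc (-((N k + 1 : ℕ) : ℤ)) ((N k + 1 : ℕ) : ℤ) := by
    simp only [Finset.mem_Icc]
    push_cast
    omega
  have hm2 : ((N k:ℤ)) ∈ Finset.Icc (-((N k + 1 : ℕ) : ℤ)) ((N k + 1 : ℕ) : ℤ) := by
    simp only [Finset.mem_Icc]
    push_cast
    omega
  rw [hs1, Finset.sum_ite_eq' _ (-((N k:ℤ)+1)) (fun _ => (1:ℝ)), if_pos hm1,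
    Finset.sum_ite_eq' _ ((N k:ℤ)) (fun _ => (lam k)^2), if_pos hm2]
  ring

lemma bond_sum {d : ℕ} (N : Fin d → ℕ) (lam : Fin d → ℝ) (k : Fin d) :
    (∑ x ∈ box (fun j => N j + 1),
      (if (x + unitVec d k) ∈ box (fun j => N j + 1) then
        (rr N (x + unitVec d k) - lam k * rr N x)^2 else 0))
    = (1 + (lam k)^2 + 2 * (N k : ℝ) * (1 - lam k)^2)
        * ∏ j ∈ Finset.univ.erase k, (2 * (N j : ℝ) + 1) := by
  rw [Finset.sum_congr rfl fun x _ => point_eq N lam k x]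
  rw [show (box (fun j => N j + 1) : Finset (Site d))
      = Fintype.piFinset (fun j => Finset.Icc (-((N j + 1 : ℕ) : ℤ)) ((N j + 1 : ℕ) : ℤ)) from rfl]
  rw [← Finset.prod_univ_sum]
  rw [← Finset.mul_prod_erase Finset.univ _ (Finset.mem_univ k)]
  rw [gk_sum N lam k]
  congr 1
  refine Finset.prod_congr rfl fun j hj => ?_
  exact gj_sum N lam k j (Finset.mem_erase.mp hj).1

end Energy



section Final

variable {d : ℕ}

lemma box_card (N : Fin d → ℕ) : ((box N).card : ℝ) = ∏ j, (2 * (N j : ℝ) + 1) := by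
  rw [box, Fintype.card_piFinset]
  push_cast
  refine Finset.prod_congr rfl fun j _ => ?_
  rw [Int.card_Icc]
  have h : ((N j : ℤ) + 1 - (-(N j : ℤ))).toNat = 2 * N j + 1 := by omega
  rw [h]
  push_cast
  ring

lemma box_subset (N : Fin d → ℕ) : box N ⊆ box (fun k => N k + 1) := by
  intro w hw
  rw [mem_box_iff] at hw ⊢
  intro j
  have := hw j
  push_cast
  omega

lemma sum_rr_sq (N : Fin d → ℕ) :
    ∑ z : ↑(box fun k => N k + 1), rr N (z : Site d) ^ 2 = ((box N).card : ℝ) := by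
  rw [Finset.sum_coe_sort (box fun k => N k + 1) (fun w => rr N w ^ 2)]
  have h1 : ∀ w ∈ box (fun k => N k + 1), rr N w ^ 2 = if w ∈ box N then (1:ℝ) else 0 := by
    intro w _
    unfold rr
    split_ifs <;> norm_num
  rw [Finset.sum_congr rfl h1, ← Finset.sum_filter, Finset.filter_mem_eq_inter,
    Finset.inter_eq_right.mpr (box_subset N), Finset.sum_const, nsmul_eq_mul, mul_one]

lemma norm_trial_sq (N : Fin d → ℕ) :
    ‖boxTrial N‖ ^ 2 = ∏ j, (2 * (N j : ℝ) + 1) := by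
  have hφ : ∀ σ, boxTrial N σ
      = ∑ x : ↑(box fun k => N k + 1), ((rr N (x : Site d) : ℝ) : ℂ) * ksi x σ := by
    intro σ
    refine Finset.sum_congr rfl fun x _ => ?_
    unfold rr
    split_ifs <;> simp
  have happ : ∀ z : ↑(box fun k => N k + 1),
      boxTrial N (PVBSaux.delta z) = ((rr N (z : Site d) : ℝ) : ℂ) := by
    intro z
    rw [hφ]
    exact PVBSaux.trial_apply _ z
  have h0 := PVBSaux.inner_trial (Λ := box fun k => N k + 1)
    (fun z => ((rr N (z : Site d) : ℝ) : ℂ)) (boxTrial N) (boxTrial N) hφ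
  have hsum : (∑ z : ↑(box fun k => N k + 1),
      (starRingEnd ℂ) ((fun z : ↑(box fun k => N k + 1) => ((rr N (z : Site d) : ℝ) : ℂ)) z)
        * boxTrial N (PVBSaux.delta z))
      = (((box N).card : ℝ) : ℂ) := by
    have hterm : ∀ z : ↑(box fun k => N k + 1),
        (starRingEnd ℂ) ((rr N (z : Site d) : ℝ) : ℂ) * boxTrial N (PVBSaux.delta z)
        = ((rr N (z : Site d) ^ 2 : ℝ) : ℂ) := by
      intro z
      rw [happ z, Complex.conj_ofReal]
      push_cast
      ring
    rw [Finset.sum_congr rfl fun z _ => hterm z, ← Complex.ofReal_sum, sum_rr_sq N]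
  have hn := inner_self_eq_norm_sq (𝕜 := ℂ) (boxTrial N)
  rw [← hn, h0, hsum]
  rw [← box_card N]
  simp

set_option maxHeartbeats 1000000 in
theorem pvbs_bulk_variational_bound' (N : Fin d → ℕ) (lam : Fin d → ℝ)
    (hlam : ∀ k, 0 < lam k) :
    (inner ℂ (boxTrial N) (Ham (box (fun k => N k + 1)) lam (boxTrial N)) : ℂ).re /
        ‖boxTrial N‖ ^ 2 ≤
      (∑ k ∈ Finset.univ.filter (fun k : Fin d => lam k ≠ 1),
          (1 - lam k) ^ 2 / (1 + (lam k) ^ 2)) +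
      ∑ k : Fin d, 1 / (2 * (N k : ℝ) + 1) := by
  rw [energy_eq N lam, Complex.ofReal_re, norm_trial_sq N]
  have hk : ∀ k : Fin d, (∑ x : ↑(box fun k => N k + 1),
      (if ((x : Site d) + unitVec d k) ∈ box (fun k => N k + 1) then
        (rr N ((x : Site d) + unitVec d k) - lam k * rr N x)^2 / (1 + (lam k)^2) else 0))
      = ((1 + (lam k)^2 + 2 * (N k : ℝ) * (1 - lam k)^2) / (1 + (lam k)^2))
          * ∏ j ∈ Finset.univ.erase k, (2 * (N j : ℝ) + 1) := by
    intro k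
    have hl : (0:ℝ) < 1 + lam k ^ 2 := by positivity
    have hdiv : ∀ x : ↑(box fun k => N k + 1),
        (if ((x : Site d) + unitVec d k) ∈ box (fun k => N k + 1) then
          (rr N ((x : Site d) + unitVec d k) - lam k * rr N x)^2 / (1 + (lam k)^2) else 0)
        = (if ((x : Site d) + unitVec d k) ∈ box (fun k => N k + 1) then
          (rr N ((x : Site d) + unitVec d k) - lam k * rr N x)^2 else 0) / (1 + (lam k)^2) := by
      intro x
      split_ifs <;> simp
    rw [Finset.sum_congr rfl fun x _ => hdiv x, ← Finset.sum_div]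
    rw [Finset.sum_coe_sort (box fun k => N k + 1)
      (fun w => if (w + unitVec d k) ∈ box (fun k => N k + 1) then
        (rr N (w + unitVec d k) - lam k * rr N w)^2 else 0)]
    rw [bond_sum N lam k]
    ring
  rw [Finset.sum_congr rfl fun k _ => hk k]
  rw [Finset.sum_div, Finset.sum_filter, ← Finset.sum_add_distrib]
  refine Finset.sum_le_sum fun k _ => ?_
  have hP : (0:ℝ) < ∏ j ∈ Finset.univ.erase k, (2 * (N j : ℝ) + 1) :=
    Finset.prod_pos fun j _ => by positivity
  have hNk : (0:ℝ) < 2 * (N k : ℝ) + 1 := by positivity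
  have hl : (0:ℝ) < 1 + lam k ^ 2 := by positivity
  have hQ : (∏ j, (2 * (N j : ℝ) + 1))
      = (2 * (N k : ℝ) + 1) * ∏ j ∈ Finset.univ.erase k, (2 * (N j : ℝ) + 1) :=
    (Finset.mul_prod_erase Finset.univ _ (Finset.mem_univ k)).symm
  rw [hQ]
  have hrw : (((1 + (lam k)^2 + 2 * (N k : ℝ) * (1 - lam k)^2) / (1 + (lam k)^2))
        * ∏ j ∈ Finset.univ.erase k, (2 * (N j : ℝ) + 1))
        / ((2 * (N k : ℝ) + 1) * ∏ j ∈ Finset.univ.erase k, (2 * (N j : ℝ) + 1))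
      = (1 + (lam k)^2 + 2 * (N k : ℝ) * (1 - lam k)^2)
        / ((1 + (lam k)^2) * (2 * (N k : ℝ) + 1)) := by
    field_simp
  rw [hrw]
  by_cases h1 : lam k = 1
  · rw [if_neg (fun hh => hh h1), zero_add, h1]
    apply le_of_eq
    have h2 : (0:ℝ) < 2 * (N k : ℝ) + 1 := hNk
    field_simp
    try ring
  · rw [if_pos h1]
    rw [div_add_div _ _ (ne_of_gt hl) (ne_of_gt hNk)]
    rw [div_le_div_iff₀ (mul_pos hl hNk) (mul_pos hl hNk)]
    nlinarith [sq_nonneg (1 - lam k), mul_pos hl hNk, (Nat.cast_nonneg (N k) : (0:ℝ) ≤ (N k : ℝ))]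

end Final


/-- variational upper bound for the bulk gap.  With `φ = ∑_{x∈Λ_N} ξ_{{x}}`,
`⟨φ, H_{Λ_N^{(1)}} φ⟩/‖φ‖² ≤ ∑_{k : λ_k≠1} (1−λ_k)²/(1+λ_k²) + ∑_k 1/(2N_k+1)`. -/
theorem pvbs_bulk_variational_bound {d : ℕ} (N : Fin d → ℕ) (lam : Fin d → ℝ)
    (hlam : ∀ k, 0 < lam k) :
    (inner ℂ (boxTrial N) (Ham (box (fun k => N k + 1)) lam (boxTrial N)) : ℂ).re /
        ‖boxTrial N‖ ^ 2 ≤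
      (∑ k ∈ Finset.univ.filter (fun k : Fin d => lam k ≠ 1),
          (1 - lam k) ^ 2 / (1 + (lam k) ^ 2)) +
      ∑ k : Fin d, 1 / (2 * (N k : ℝ) + 1) := by
  exact pvbs_bulk_variational_bound' N lam hlam

end
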